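/- Suppose ψ(n) = C − Σ_k r_k c_k(n) where C ∈ ℤ, (r_k) is a sequence of integers with finitely many nonzero terms, and c_k is the Ramanujan sum. Then the Dold coefficients satisfy a_1(ψ) = C − Σ_k μ(k) r_k and a_n(ψ) = −Σ_{k : n | k} μ(k/n) r_k for n ≥ 2. -/

import Mathlib

open Finset ArithmeticFunction

lemma sum_mu (N : ℕ) (hN : N ≠ 0) :
    ∑ d ∈ N.divisors, (moebius (N / d) : ℤ) = if N = 1 then 1 else 0 := by
  have h := congrArg (fun f : ArithmeticFunction ℤ => f N) moebius_mul_coe_zeta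
  simp only [mul_apply, one_apply] at h
  rw [Nat.sum_divisorsAntidiagonal' (f := fun a b => (moebius a : ℤ) * ((zeta : ArithmeticFunction ℤ) b))] at h
  rw [← h]
  apply Finset.sum_congr rfl
  intro d hd
  rw [Nat.mem_divisors] at hd
  have hd0 : d ≠ 0 := by rintro rfl; exact hN (Nat.eq_zero_of_zero_dvd hd.1)
  simp [natCoe_apply, zeta_apply, hd0]

lemma sum_mu_filter (n e : ℕ) (hn : n ≠ 0) (he : e ∣ n) :
    ∑ d ∈ n.divisors.filter (fun d => e ∣ d), (moebius (n / d) : ℤ)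
      = if e = n then 1 else 0 := by
  have he0 : e ≠ 0 := fun h => hn (by simpa [h] using he)
  have hne : n / e ≠ 0 :=
    Nat.div_ne_zero_iff.mpr ⟨he0, Nat.le_of_dvd (Nat.pos_of_ne_zero hn) he⟩
  have key := sum_mu (n / e) hne
  have hiff : e = n ↔ n / e = 1 := by
    constructor
    · rintro rfl; exact Nat.div_self (Nat.pos_of_ne_zero hn)
    · intro h1
      have := Nat.div_mul_cancel he
      rw [h1, one_mul] at this; exact this
  rw [show (if e = n then (1:ℤ) else 0) = if n / e = 1 then 1 else 0 by
    simp [hiff], ← key]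
  apply Finset.sum_nbij' (i := fun d => d / e) (j := fun m => e * m)
  · intro d hd
    simp only [Finset.mem_filter, Nat.mem_divisors] at hd
    rw [Nat.mem_divisors]
    obtain ⟨c, rfl⟩ := hd.2
    rw [Nat.mul_div_cancel_left c (Nat.pos_of_ne_zero he0)]
    exact ⟨(Nat.dvd_div_iff_mul_dvd he).mpr hd.1.1, hne⟩
  · intro m hm
    rw [Nat.mem_divisors] at hm
    simp only [Finset.mem_filter, Nat.mem_divisors]
    exact ⟨⟨(Nat.dvd_div_iff_mul_dvd he).mp hm.1, hn⟩, Dvd.intro m rfl⟩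
  · intro d hd
    simp only [Finset.mem_filter] at hd
    exact Nat.mul_div_cancel' hd.2
  · intro m hm
    exact Nat.mul_div_cancel_left m (Nat.pos_of_ne_zero he0)
  · intro d hd
    simp only [Finset.mem_filter, Nat.mem_divisors] at hd
    congr 1
    rcases hd.2 with ⟨c, rfl⟩
    rw [Nat.mul_div_cancel_left c (Nat.pos_of_ne_zero he0), Nat.div_div_eq_div_mul]

lemma sum_mu_ram (n k : ℕ) (hn : n ≠ 0) (hk : k ≠ 0) :
    ∑ d ∈ n.divisors, (moebius (n / d) : ℤ) *
        (∑ e ∈ (Nat.gcd k d).divisors, (moebius (k / e) : ℤ) * e)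
      = if n ∣ k then (moebius (k / n) : ℤ) * n else 0 := by
  have hgd : ∀ d, d ≠ 0 → (Nat.gcd k d).divisors = d.divisors.filter (fun e => e ∣ k) := by
    intro d hd
    have hg0 : Nat.gcd k d ≠ 0 := Nat.gcd_ne_zero_left hk
    ext e
    simp only [Nat.mem_divisors, Finset.mem_filter, Nat.dvd_gcd_iff, hg0, hd, ne_eq,
      not_false_eq_true, and_true]
    tauto
  calc ∑ d ∈ n.divisors, (moebius (n / d) : ℤ) *
        (∑ e ∈ (Nat.gcd k d).divisors, (moebius (k / e) : ℤ) * e)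
      = ∑ d ∈ n.divisors, ∑ e ∈ d.divisors.filter (fun e => e ∣ k),
          (moebius (n / d) : ℤ) * ((moebius (k / e) : ℤ) * e) := by
        refine Finset.sum_congr rfl fun d hd => ?_
        rw [Nat.mem_divisors] at hd
        have hd0 : d ≠ 0 := fun h => hn (by simpa [h] using hd.1)
        rw [hgd d hd0, Finset.mul_sum]
    _ = ∑ e ∈ n.divisors.filter (fun e => e ∣ k),
          ∑ d ∈ n.divisors.filter (fun d => e ∣ d),
          (moebius (n / d) : ℤ) * ((moebius (k / e) : ℤ) * e) := by
        apply Finset.sum_comm'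
        intro d e
        simp only [Finset.mem_filter, Nat.mem_divisors]
        constructor
        · rintro ⟨⟨hdn, -⟩, ⟨hed, hd0⟩, hek⟩
          exact ⟨⟨⟨hdn, hn⟩, hed⟩, ⟨hed.trans hdn, hn⟩, hek⟩
        · rintro ⟨⟨⟨hdn, -⟩, hed⟩, ⟨-, -⟩, hek⟩
          have hd0 : d ≠ 0 := fun h => hn (by simpa [h] using hdn)
          exact ⟨⟨hdn, hn⟩, ⟨hed, hd0⟩, hek⟩
    _ = ∑ e ∈ n.divisors.filter (fun e => e ∣ k),
          (if e = n then (1:ℤ) else 0) * ((moebius (k / e) : ℤ) * e) := by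
        refine Finset.sum_congr rfl fun e he => ?_
        simp only [Finset.mem_filter, Nat.mem_divisors] at he
        rw [← Finset.sum_mul, sum_mu_filter n e hn he.1.1]
    _ = if n ∣ k then (moebius (k / n) : ℤ) * n else 0 := by
        simp only [ite_mul, one_mul, zero_mul]
        rw [Finset.sum_ite_eq' (n.divisors.filter (fun e => e ∣ k)) n
          (fun e => (moebius (k / e) : ℤ) * e)]
        simp [Nat.mem_divisors, hn]

/-- If ψ(n) = C − Σ_k r_k c_k(n), then the Dold coefficients satisfy
a_1(ψ) = C − Σ_k μ(k) r_k and a_n(ψ) = −Σ_{k : n|k} μ(k/n) r_k for n ≥ 2. -/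
theorem stmt11 (K : ℕ) (C : ℤ) (r : ℕ → ℤ) (hr : ∀ k, K < k → r k = 0)
    (ψ : ℕ → ℤ)
    (hψ : ∀ n, 1 ≤ n → ψ n = C - ∑ k ∈ Finset.Icc 1 K, r k *
        ∑ d ∈ (Nat.gcd k n).divisors, ArithmeticFunction.moebius (k / d) * (d : ℤ))
    (a : ℕ → ℚ)
    (ha : ∀ n, 1 ≤ n → a n = (1 / (n : ℚ)) * ∑ d ∈ n.divisors,
        ((ArithmeticFunction.moebius (n / d) : ℤ) : ℚ) * (ψ d : ℚ)) :
    a 1 = (C : ℚ) - ∑ k ∈ Finset.Icc 1 K,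
        ((ArithmeticFunction.moebius k : ℤ) : ℚ) * (r k : ℚ) ∧
    ∀ n, 2 ≤ n → a n = -∑ k ∈ (Finset.Icc 1 K).filter (fun k => n ∣ k),
        ((ArithmeticFunction.moebius (k / n) : ℤ) : ℚ) * (r k : ℚ) := by
  have hS : ∀ n : ℕ, n ≠ 0 →
      ∑ d ∈ n.divisors, (moebius (n / d) : ℤ) * ψ d
        = (if n = 1 then C else 0) - ∑ k ∈ Finset.Icc 1 K,
            r k * (if n ∣ k then (moebius (k / n) : ℤ) * n else 0) := by
    intro n hn
    calc ∑ d ∈ n.divisors, (moebius (n / d) : ℤ) * ψ d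
        = ∑ d ∈ n.divisors, ((moebius (n / d) : ℤ) * C -
            ∑ k ∈ Finset.Icc 1 K, r k * ((moebius (n / d) : ℤ) *
              ∑ e ∈ (Nat.gcd k d).divisors, (moebius (k / e) : ℤ) * e)) := by
          refine Finset.sum_congr rfl fun d hd => ?_
          rw [Nat.mem_divisors] at hd
          have hd0 : d ≠ 0 := fun h => hn (by simpa [h] using hd.1)
          rw [hψ d (Nat.one_le_iff_ne_zero.mpr hd0), mul_sub, Finset.mul_sum]
          congr 1
          exact Finset.sum_congr rfl fun k _ => by ring
      _ = (∑ d ∈ n.divisors, (moebius (n / d) : ℤ)) * C -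
            ∑ k ∈ Finset.Icc 1 K, r k * ∑ d ∈ n.divisors, (moebius (n / d) : ℤ) *
              ∑ e ∈ (Nat.gcd k d).divisors, (moebius (k / e) : ℤ) * e := by
          rw [Finset.sum_sub_distrib, Finset.sum_mul, Finset.sum_comm]
          congr 1
          exact Finset.sum_congr rfl fun k _ => (Finset.mul_sum _ _ _).symm
      _ = (if n = 1 then C else 0) - ∑ k ∈ Finset.Icc 1 K,
            r k * (if n ∣ k then (moebius (k / n) : ℤ) * n else 0) := by
          rw [sum_mu n hn]
          congr 1
          · split <;> simp
          · refine Finset.sum_congr rfl fun k hk => ?_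
            rw [Finset.mem_Icc] at hk
            rw [sum_mu_ram n k hn (by omega)]
  have hcast : ∀ m : ℕ, (∑ d ∈ m.divisors, ((moebius (m / d) : ℤ) : ℚ) * ((ψ d : ℤ) : ℚ))
      = ((∑ d ∈ m.divisors, (moebius (m / d) : ℤ) * ψ d : ℤ) : ℚ) := fun m => by
    push_cast; rfl
  constructor
  · rw [ha 1 le_rfl, hcast, hS 1 one_ne_zero]
    simp only [if_pos rfl, Nat.one_dvd, if_true, Nat.div_one, Nat.cast_one, mul_one]
    push_cast
    rw [one_div_one, one_mul]
    congr 1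
    exact Finset.sum_congr rfl fun k _ => by ring
  · intro n hn2
    have hn : n ≠ 0 := by omega
    have h1 : n ≠ 1 := by omega
    have hz : (∑ k ∈ Finset.Icc 1 K, r k * (if n ∣ k then (moebius (k / n) : ℤ) * n else 0))
        = (n : ℤ) * ∑ k ∈ (Finset.Icc 1 K).filter (fun k => n ∣ k),
            (moebius (k / n) : ℤ) * r k := by
      rw [Finset.mul_sum, Finset.sum_filter]
      refine Finset.sum_congr rfl fun k _ => ?_
      by_cases h : n ∣ k <;> simp [h] <;> ring
    rw [ha n (by omega), hcast, hS n hn, if_neg h1, hz]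
    have hnQ : (n : ℚ) ≠ 0 := Nat.cast_ne_zero.mpr hn
    push_cast
    rw [zero_sub, mul_neg, ← mul_assoc, one_div, inv_mul_cancel₀ hnQ, one_mul]
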